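/- arXiv:1501.03640 — 2 statements merged into one kernel-verified Lean document; each statement's English description precedes it below -/
import Mathlib

section
/- Let E = {n_1, n_2, ...} be an infinite subset of ℕ with n_k < n_{k+1}, and let μ be a scaling function. Then p̄_μ(E) = 1 if and only if liminf_{k→∞} μ(n_{k+1})/μ(n_k) = 0. -/
open Filter Topology

/-- `lamMu μ E n`: the analogue of the largest-hole length at infinity, i.e. the supremum
of `μ a - μ b` over `n ≤ a < b` such that no element of `E` lies strictly between `a` and `b`. -/
noncomputable def lamMu (μ : ℕ → ℝ) (E : Set ℕ) (n : ℕ) : ℝ :=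
  sSup {d : ℝ | ∃ a b : ℕ, n ≤ a ∧ a < b ∧ (∀ m : ℕ, a < m → m < b → m ∉ E) ∧ d = μ a - μ b}

/-- The upper porosity of `E` at infinity w.r.t. the scaling function `μ`. -/
noncomputable def upperPorosityInf (μ : ℕ → ℝ) (E : Set ℕ) : ℝ :=
  Filter.limsup (fun n => lamMu μ E n / μ n) Filter.atTop

/-- The lower porosity of `E` at infinity w.r.t. the scaling function `μ`. -/
noncomputable def lowerPorosityInf (μ : ℕ → ℝ) (E : Set ℕ) : ℝ :=
  Filter.liminf (fun n => lamMu μ E n / μ n) Filter.atTop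

/-- The set of porosity numbers of `E` at infinity w.r.t. `μ`. -/
def porosityNumbersInf (μ : ℕ → ℝ) (E : Set ℕ) : Set ℝ :=
  {p : ℝ | ∃ n : ℕ → ℕ, StrictMono n ∧
    Tendsto (fun k => lamMu μ E (n k) / μ (n k)) atTop (nhds p)}

lemma lamMu_bddAbove (μ : ℕ → ℝ) (hμanti : StrictAnti μ) (hμpos : ∀ n, 0 < μ n)
    (E : Set ℕ) (n : ℕ) :
    ∀ d ∈ {d : ℝ | ∃ a b : ℕ, n ≤ a ∧ a < b ∧ (∀ m : ℕ, a < m → m < b → m ∉ E) ∧ d = μ a - μ b},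
      d ≤ μ n := by
  rintro d ⟨a, b, hna, hab, _, rfl⟩
  have h1 : μ a ≤ μ n := hμanti.antitone hna
  have h2 : 0 < μ b := hμpos b
  linarith

lemma lamMu_le (μ : ℕ → ℝ) (hμanti : StrictAnti μ) (hμpos : ∀ n, 0 < μ n)
    (E : Set ℕ) (n : ℕ) : lamMu μ E n ≤ μ n :=
  Real.sSup_le (lamMu_bddAbove μ hμanti hμpos E n) (hμpos n).le

lemma le_lamMu (μ : ℕ → ℝ) (hμanti : StrictAnti μ) (hμpos : ∀ n, 0 < μ n)
    (E : Set ℕ) (n a b : ℕ) (hna : n ≤ a) (hab : a < b)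
    (hhole : ∀ m : ℕ, a < m → m < b → m ∉ E) :
    μ a - μ b ≤ lamMu μ E n :=
  le_csSup ⟨μ n, lamMu_bddAbove μ hμanti hμpos E n⟩ ⟨a, b, hna, hab, hhole, rfl⟩

lemma lamMu_le_of_ratio (μ : ℕ → ℝ) (hμanti : StrictAnti μ) (hμpos : ∀ n, 0 < μ n)
    (nseq : ℕ → ℕ) (hmono : StrictMono nseq) (c : ℝ) (hc0 : 0 ≤ c) (hc1 : c ≤ 1) (K : ℕ)
    (hK : ∀ k, K ≤ k → c * μ (nseq k) ≤ μ (nseq (k + 1)))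
    (n : ℕ) (hn : nseq K ≤ n) :
    lamMu μ (Set.range nseq) n ≤ (1 - c) * μ n := by
  apply Real.sSup_le
  · rintro d ⟨a, b, hna, hab, hhole, rfl⟩
    have hex : ∃ m, a < nseq m := ⟨a + 1, lt_of_lt_of_le (Nat.lt_succ_self a) hmono.le_apply⟩
    set m := Nat.find hex with hmdef
    have hm : a < nseq m := Nat.find_spec hex
    have hKm : K < m := by
      by_contra h
      push_neg at h
      have : nseq m ≤ nseq K := hmono.monotone h
      omega
    have hm1 : nseq (m - 1) ≤ a := by
      have := Nat.find_min hex (show m - 1 < m by omega)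
      omega
    have hbm : b ≤ nseq m := by
      by_contra h
      push_neg at h
      exact hhole (nseq m) hm h ⟨m, rfl⟩
    have h1 : c * μ (nseq (m - 1)) ≤ μ (nseq m) := by
      have := hK (m - 1) (by omega)
      rwa [Nat.sub_add_cancel (by omega : 1 ≤ m)] at this
    have h2 : μ a ≤ μ (nseq (m - 1)) := hμanti.antitone hm1
    have h3 : μ (nseq m) ≤ μ b := hμanti.antitone hbm
    have h4 : μ a ≤ μ n := hμanti.antitone hna
    have h5 : c * μ a ≤ c * μ (nseq (m - 1)) := mul_le_mul_of_nonneg_left h2 hc0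
    have h6 : (1 - c) * μ a ≤ (1 - c) * μ n :=
      mul_le_mul_of_nonneg_left h4 (by linarith)
    nlinarith
  · exact mul_nonneg (by linarith) (hμpos n).le

theorem stronglyPorous_at_infinity_iff
    (μ : ℕ → ℝ) (hμanti : StrictAnti μ) (hμpos : ∀ n, 0 < μ n)
    (hμ0 : Tendsto μ atTop (nhds 0))
    (nseq : ℕ → ℕ) (hmono : StrictMono nseq) :
    upperPorosityInf μ (Set.range nseq) = 1 ↔
      Filter.liminf (fun k => μ (nseq (k + 1)) / μ (nseq k)) Filter.atTop = 0 := by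
  set E := Set.range nseq with hE
  set f : ℕ → ℝ := fun n => lamMu μ E n / μ n with hf
  set g : ℕ → ℝ := fun k => μ (nseq (k + 1)) / μ (nseq k) with hg
  have hgpos : ∀ k, 0 < g k := fun k => div_pos (hμpos _) (hμpos _)
  have hglt : ∀ k, g k < 1 := fun k =>
    (div_lt_one (hμpos _)).2 (hμanti (hmono (Nat.lt_succ_self k)))
  have hf1 : ∀ n, f n ≤ 1 := fun n =>
    (div_le_one (hμpos n)).2 (lamMu_le μ hμanti hμpos E n)
  -- lower bound at nseq k : f (nseq k) ≥ 1 - g k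
  have hfge : ∀ k, 1 - g k ≤ f (nseq k) := by
    intro k
    have hhole : ∀ m : ℕ, nseq k < m → m < nseq (k + 1) → m ∉ E := by
      rintro m hm1 hm2 ⟨j, rfl⟩
      have h1 : k < j := hmono.lt_iff_lt.1 hm1
      have h2 : j < k + 1 := hmono.lt_iff_lt.1 hm2
      omega
    have hle := le_lamMu μ hμanti hμpos E (nseq k) (nseq k) (nseq (k + 1)) le_rfl
      (hmono (Nat.lt_succ_self k)) hhole
    rw [hf, hg]
    rw [le_div_iff₀ (hμpos (nseq k))]
    have : (1 - μ (nseq (k + 1)) / μ (nseq k)) * μ (nseq k)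
        = μ (nseq k) - μ (nseq (k + 1)) := by
      rw [sub_mul, one_mul, div_mul_cancel₀ _ (hμpos (nseq k)).ne']
    rw [this]
    exact hle
  have hf0 : ∀ n, 0 ≤ f n := by
    intro n
    have hhole : ∀ m : ℕ, n < m → m < n + 1 → m ∉ E := by intro m h1 h2; omega
    have hle := le_lamMu μ hμanti hμpos E n n (n + 1) le_rfl (Nat.lt_succ_self n) hhole
    have : 0 ≤ lamMu μ E n := le_trans (by linarith [hμanti (Nat.lt_succ_self n)]) hle
    exact div_nonneg this (hμpos n).le
  have hfb : IsBoundedUnder (· ≤ ·) atTop f :=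
    ⟨1, Filter.eventually_map.2 (Eventually.of_forall hf1)⟩
  have hfcob : IsCoboundedUnder (· ≤ ·) atTop f :=
    isCoboundedUnder_le_of_eventually_le atTop (Eventually.of_forall hf0)
  have hgb : IsBoundedUnder (· ≥ ·) atTop g :=
    ⟨0, Filter.eventually_map.2 (Eventually.of_forall fun k => (hgpos k).le)⟩
  have hgcob : IsCoboundedUnder (· ≥ ·) atTop g :=
    isCoboundedUnder_ge_of_eventually_le atTop (Eventually.of_forall fun k => (hglt k).le)
  constructor
  · intro h1
    by_contra hne
    have hliminf0 : 0 ≤ liminf g atTop := le_liminf_of_le hgcob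
      (Eventually.of_forall fun k => (hgpos k).le)
    have hL : 0 < liminf g atTop := lt_of_le_of_ne hliminf0 (Ne.symm hne)
    set c := liminf g atTop / 2 with hcdef
    have hc : 0 < c := by positivity
    have hcl : c < liminf g atTop := by linarith
    have hev : ∀ᶠ k in atTop, c < g k := eventually_lt_of_lt_liminf hcl hgb
    obtain ⟨K, hK⟩ := eventually_atTop.1 hev
    have hc1 : c < 1 := lt_trans (hK K le_rfl) (hglt K)
    have key : ∀ n, nseq K ≤ n → f n ≤ 1 - c := by
      intro n hn
      have hlam := lamMu_le_of_ratio μ hμanti hμpos nseq hmono c hc.le hc1.le K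
        (fun k hk => by
          have := hK k hk
          rw [hg] at this
          have := (lt_div_iff₀ (hμpos (nseq k))).1 this
          linarith) n hn
      rw [hf, div_le_iff₀ (hμpos n)]
      exact hlam
    have hle : limsup f atTop ≤ 1 - c :=
      limsup_le_of_le hfcob (eventually_atTop.2 ⟨nseq K, key⟩)
    rw [upperPorosityInf] at h1
    rw [show Filter.limsup (fun n => lamMu μ E n / μ n) Filter.atTop = limsup f atTop from rfl]
      at h1
    rw [h1] at hle
    linarith
  · intro h0
    apply le_antisymm
    · exact limsup_le_of_le hfcob (Eventually.of_forall hf1)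
    · refine le_of_forall_pos_le_add fun ε hε => ?_
      have hfreq : ∃ᶠ k in atTop, g k < ε := by
        by_contra h
        rw [not_frequently] at h
        have : ε ≤ liminf g atTop := le_liminf_of_le hgcob (h.mono fun k hk => not_lt.1 hk)
        rw [h0] at this
        linarith
      have hfreqf : ∃ᶠ n in atTop, 1 - ε ≤ f n := by
        rw [frequently_atTop] at hfreq ⊢
        intro N
        obtain ⟨k, hkN, hk⟩ := hfreq N
        exact ⟨nseq k, le_trans hkN hmono.le_apply, le_trans (by linarith) (hfge k)⟩
      have := le_limsup_of_frequently_le hfreqf hfb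
      have hlim : limsup f atTop = upperPorosityInf μ E := rfl
      linarith
end

section
/- Let A = {a_1, a_2, ...} ⊆ (0,∞) with a_k > a_{k+1} > 0 for all k and lim_{k→∞} a_{k+1}/a_k = 0. Then the right lower porosity of A at 0 equals 1/2: p̲(A) = 1/2. -/
open Filter Topology

/-- The length of the largest open subinterval of `(0, h)` containing no point of `E`. -/
noncomputable def lam (E : Set ℝ) (h : ℝ) : ℝ :=
  sSup {l : ℝ | ∃ a b : ℝ, 0 ≤ a ∧ a ≤ b ∧ b ≤ h ∧ Set.Ioo a b ∩ E = ∅ ∧ l = b - a}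

/-- The right lower porosity of `E ⊆ ℝ⁺` at `0`. -/
noncomputable def lowerPorosity (E : Set ℝ) : ℝ :=
  Filter.liminf (fun h => lam E h / h) (nhdsWithin 0 (Set.Ioi 0))

lemma lam_mem_upper {E : Set ℝ} {h : ℝ} :
    ∀ l ∈ {l : ℝ | ∃ a b : ℝ, 0 ≤ a ∧ a ≤ b ∧ b ≤ h ∧ Set.Ioo a b ∩ E = ∅ ∧ l = b - a},
      l ≤ h := by
  rintro l ⟨x, y, hx, hxy, hyh, -, rfl⟩
  linarith

lemma lam_bddAbove {E : Set ℝ} {h : ℝ} :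
    BddAbove {l : ℝ | ∃ a b : ℝ, 0 ≤ a ∧ a ≤ b ∧ b ≤ h ∧ Set.Ioo a b ∩ E = ∅ ∧ l = b - a} :=
  ⟨h, lam_mem_upper⟩

lemma le_lam {E : Set ℝ} {h x y : ℝ} (hx : 0 ≤ x) (hxy : x ≤ y) (hyh : y ≤ h)
    (hE : Set.Ioo x y ∩ E = ∅) : y - x ≤ lam E h :=
  le_csSup lam_bddAbove ⟨x, y, hx, hxy, hyh, hE, rfl⟩

lemma lam_le {E : Set ℝ} {h : ℝ} (hh : 0 ≤ h) : lam E h ≤ h :=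
  Real.sSup_le lam_mem_upper hh

lemma lam_nonneg {E : Set ℝ} {h : ℝ} (hh : 0 ≤ h) : 0 ≤ lam E h := by
  have := le_lam (E := E) (h := h) (x := 0) (y := 0) le_rfl le_rfl hh (by simp)
  linarith

theorem lowerPorosity_of_fast_decreasing
    (a : ℕ → ℝ) (hpos : ∀ k, 0 < a k) (hanti : ∀ k, a (k + 1) < a k)
    (hratio : Tendsto (fun k => a (k + 1) / a k) atTop (nhds 0)) :
    lowerPorosity (Set.range a) = 1 / 2 := by
  have hsa : StrictAnti a := strictAnti_nat_of_succ_lt hanti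
  -- a tends to 0
  have ha0 : Tendsto a atTop (nhds 0) := by
    have hbdd : BddBelow (Set.range a) := ⟨0, by rintro x ⟨k, rfl⟩; exact (hpos k).le⟩
    have hlim : Tendsto a atTop (nhds (⨅ k, a k)) :=
      tendsto_atTop_ciInf hsa.antitone hbdd
    have hL0 : 0 ≤ ⨅ k, a k := le_ciInf fun k => (hpos k).le
    rcases eq_or_lt_of_le hL0 with hL | hL
    · rwa [← hL] at hlim
    · exfalso
      have h1 : Tendsto (fun k => a (k + 1) / a k) atTop
          (nhds ((⨅ k, a k) / (⨅ k, a k))) :=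
        Tendsto.div (hlim.comp (tendsto_add_atTop_nat 1)) hlim hL.ne'
      rw [div_self hL.ne'] at h1
      have := tendsto_nhds_unique hratio h1
      norm_num at this
  -- the function is bounded between 0 and 1 on (0, ∞)
  have hfb : ∀ h ∈ Set.Ioi (0:ℝ), lam (Set.range a) h / h ∈ Set.Icc (0:ℝ) 1 := by
    intro h hh
    rw [Set.mem_Ioi] at hh
    constructor
    · exact div_nonneg (lam_nonneg hh.le) hh.le
    · rw [div_le_one hh]; exact lam_le hh.le
  have hbdd_le : IsBoundedUnder (· ≤ ·) (nhdsWithin 0 (Set.Ioi 0))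
      (fun h => lam (Set.range a) h / h) :=
    ⟨1, eventually_nhdsWithin_of_forall fun h hh => (hfb h hh).2⟩
  have hbdd_ge : IsBoundedUnder (· ≥ ·) (nhdsWithin 0 (Set.Ioi 0))
      (fun h => lam (Set.range a) h / h) :=
    ⟨0, eventually_nhdsWithin_of_forall fun h hh => (hfb h hh).1⟩
  refine le_antisymm ?_ ?_
  · -- liminf ≤ 1/2, via h = 2 a k
    have h2a : Tendsto (fun k => 2 * a k) atTop (nhdsWithin 0 (Set.Ioi 0)) := by
      apply tendsto_nhdsWithin_of_tendsto_nhds_of_eventually_within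
      · simpa using ha0.const_mul 2
      · exact Eventually.of_forall fun k => by
          simpa using mul_pos two_pos (hpos k)
    have hkey : ∀ k, lam (Set.range a) (2 * a k) / (2 * a k) ≤ 1 / 2 := by
      intro k
      have hak := hpos k
      rw [div_le_iff₀ (by linarith)]
      have : lam (Set.range a) (2 * a k) ≤ a k := by
        apply Real.sSup_le _ hak.le
        rintro l ⟨x, y, hx, hxy, hyh, hE, rfl⟩
        by_cases hy : y ≤ a k
        · linarith
        · push_neg at hy
          have hxk : a k ≤ x := by
            by_contra hc
            push_neg at hc
            have : a k ∈ Set.Ioo x y ∩ Set.range a := ⟨⟨hc, hy⟩, k, rfl⟩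
            rw [hE] at this
            exact this
          linarith
      linarith
    have hfreq : ∃ᶠ h in nhdsWithin 0 (Set.Ioi 0),
        lam (Set.range a) h / h ≤ 1 / 2 :=
      h2a.frequently (Frequently.of_forall hkey)
    exact liminf_le_of_frequently_le hfreq hbdd_ge
  · -- 1/2 ≤ liminf
    have key : ∀ ε : ℝ, 0 < ε → ε < 1/2 →
        ∀ᶠ h in nhdsWithin 0 (Set.Ioi 0),
          1/2 - ε ≤ lam (Set.range a) h / h := by
      intro ε hε hε2
      -- choose N with a(k+1)/a k < ε for all k ≥ N
      have : ∀ᶠ k in atTop, a (k+1) / a k < ε := by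
        have := hratio (Metric.ball_mem_nhds 0 hε)
        filter_upwards [this] with k hk
        rw [Set.mem_preimage, Metric.mem_ball, Real.dist_eq, sub_zero, abs_lt] at hk
        exact hk.2
      obtain ⟨N, hN⟩ := this.exists_forall_of_atTop
      have hratN : ∀ k, N ≤ k → a (k+1) < ε * a k := by
        intro k hk
        have := hN k hk
        rwa [div_lt_iff₀ (hpos k)] at this
      -- for h ∈ (0, a N], the bound holds
      have hmem : Set.Ioc (0:ℝ) (a N) ∈ nhdsWithin 0 (Set.Ioi 0) := by
        have : Set.Iio (a N) ∈ nhds (0:ℝ) := Iio_mem_nhds (hpos N)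
        refine mem_of_superset (inter_mem (mem_nhdsWithin_of_mem_nhds this)
          self_mem_nhdsWithin) ?_
        rintro x ⟨hx1, hx2⟩
        exact ⟨hx2, le_of_lt hx1⟩
      filter_upwards [hmem] with h hh
      obtain ⟨hh0, hhN⟩ := hh
      -- find k ≥ N with a (k+1) < h ≤ a k
      have hex : ∃ j, a j < h := by
        rcases (ha0.eventually (eventually_lt_nhds hh0)).exists with ⟨j, hj⟩
        exact ⟨j, hj⟩
      classical
      set m := Nat.find hex with hm
      have hmlt : a m < h := Nat.find_spec hex
      have hmpos : N < m := by
        rcases lt_or_ge N m with h' | h'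
        · exact h'
        · exact absurd hmlt (not_lt.2 (le_trans hhN (hsa.antitone h')))
      obtain ⟨k, hk1⟩ : ∃ k, m = k + 1 := ⟨m - 1, by omega⟩
      rw [hk1] at hmlt hmpos
      have hkN : N ≤ k := Nat.lt_succ_iff.mp hmpos
      have hkh : h ≤ a k := by
        have := Nat.find_min hex (m := k) (by omega)
        push_neg at this
        exact this
      -- gap (a (k+1), h)
      have gap1 : Set.Ioo (a (k+1)) h ∩ Set.range a = ∅ := by
        ext x
        simp only [Set.mem_inter_iff, Set.mem_Ioo, Set.mem_range, Set.mem_empty_iff_false,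
          iff_false, not_and, forall_exists_index]
        rintro ⟨hx1, hx2⟩ ⟨j, rfl⟩
        have hjk : k < j := by
          by_contra hc
          push_neg at hc
          exact absurd (lt_of_lt_of_le hx2 hkh) (not_lt.2 (hsa.antitone hc))
        have : a j ≤ a (k+1) := hsa.antitone hjk
        linarith
      -- gap (a (k+2), a (k+1))
      have gap2 : Set.Ioo (a (k+2)) (a (k+1)) ∩ Set.range a = ∅ := by
        ext x
        simp only [Set.mem_inter_iff, Set.mem_Ioo, Set.mem_range, Set.mem_empty_iff_false,
          iff_false, not_and, forall_exists_index]
        rintro ⟨hx1, hx2⟩ ⟨j, rfl⟩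
        have hjk : k + 1 < j := by
          by_contra hc
          push_neg at hc
          exact absurd hx2 (not_lt.2 (hsa.antitone hc))
        have : a j ≤ a (k+2) := hsa.antitone hjk
        linarith
      have hb1 : h - a (k+1) ≤ lam (Set.range a) h :=
        le_lam (hpos _).le hmlt.le le_rfl gap1
      have hb2 : a (k+1) - a (k+2) ≤ lam (Set.range a) h :=
        le_lam (hpos _).le (hanti _).le hmlt.le gap2
      have hr : a (k+2) < ε * a (k+1) := hratN (k+1) (by omega)
      have hlam : (1/2 - ε) * h ≤ lam (Set.range a) h := by
        nlinarith [hpos (k+1), hpos (k+2), (lam_nonneg (E := Set.range a) hh0.le)]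
      rw [le_div_iff₀ hh0]
      exact hlam
    have : ∀ ε : ℝ, 0 < ε → 1/2 - ε ≤ lowerPorosity (Set.range a) := by
      intro ε hε
      rcases lt_or_ge ε (1/2) with h' | h'
      · exact le_liminf_of_le (hbdd_le.isCoboundedUnder_ge) (key ε hε h')
      · have h0 : (0:ℝ) ≤ Filter.liminf (fun h => lam (Set.range a) h / h)
            (nhdsWithin 0 (Set.Ioi 0)) :=
          le_liminf_of_le (hbdd_le.isCoboundedUnder_ge)
            (eventually_nhdsWithin_of_forall fun h hh => (hfb h hh).1)
        have : lowerPorosity (Set.range a) =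
            Filter.liminf (fun h => lam (Set.range a) h / h) (nhdsWithin 0 (Set.Ioi 0)) := rfl
        rw [this]; linarith
    by_contra hc
    push_neg at hc
    have := this ((1/2 - lowerPorosity (Set.range a)) / 2) (by linarith)
    linarith
end
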